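/- If C is a rational curve properly parametrized by ψ with coefficients in K(α), σ is a K-automorphism of the algebraic closure F, and C = C^σ, then the unique fractional linear transformation u_σ with ψ = ψ^σ ∘ u_σ satisfies: for all but finitely many parameters t₀ ∈ F, the value s₀ = u_σ(t₀) is the unique solution of the system ψ^σ(s) = ψ(t₀). Conversely, if C ≠ C^σ, then for all but finitely many t₀ the system ψ^σ(s) = ψ(t₀) has no solution s ∈ F. -/

import Mathlib

open Polynomial

noncomputable section

/-- The Zariski closure of a subset of affine `m`-space over `F`. -/
def zariskiClosure {F : Type*} [Field F] {m : ℕ} (S : Set (Fin m → F)) :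
    Set (Fin m → F) :=
  {x | ∀ p : MvPolynomial (Fin m) F,
    (∀ s ∈ S, MvPolynomial.eval s p = 0) → MvPolynomial.eval x p = 0}

/-- A tuple of rational functions is defined at `t` if no denominator vanishes. -/
def definedAt {F : Type*} [Field F] {m : ℕ} (ψ : Fin m → RatFunc F) (t : F) : Prop :=
  ∀ i, (ψ i).denom.eval t ≠ 0

/-- The value of a tuple of rational functions at a parameter `t`. -/
def evalParam {F : Type*} [Field F] {m : ℕ} (ψ : Fin m → RatFunc F) (t : F) :
    Fin m → F :=
  fun i => (ψ i).num.eval t / (ψ i).denom.eval t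

/-- The affine image of a tuple of rational functions. -/
def paramImage {F : Type*} [Field F] {m : ℕ} (ψ : Fin m → RatFunc F) :
    Set (Fin m → F) :=
  {x | ∃ t : F, definedAt ψ t ∧ x = evalParam ψ t}

/-- Properness (generic injectivity, equivalent to birationality in characteristic
zero): only finitely many pairs of distinct parameters give the same point. -/
def GenericallyInjective {F : Type*} [Field F] {m : ℕ} (ψ : Fin m → RatFunc F) : Prop :=
  Set.Finite {p : F × F | p.1 ≠ p.2 ∧ definedAt ψ p.1 ∧ definedAt ψ p.2 ∧
    evalParam ψ p.1 = evalParam ψ p.2}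

/-- The coefficientwise conjugate of a rational function under a field
homomorphism `σ`. -/
def conjRatFunc {F : Type*} [Field F] (σ : F →+* F) (r : RatFunc F) : RatFunc F :=
  algebraMap F[X] (RatFunc F) (r.num.map σ) / algebraMap F[X] (RatFunc F) (r.denom.map σ)

/-- A rational function is a Möbius (fractional linear) transformation if it equals
`(at+b)/(ct+d)` with `ad - bc ≠ 0`. -/
def IsMobius {F : Type*} [Field F] (u : RatFunc F) : Prop :=
  ∃ a b c d : F, a * d - b * c ≠ 0 ∧
    u = algebraMap F[X] (RatFunc F) (C a * X + C b) /
        algebraMap F[X] (RatFunc F) (C c * X + C d)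

/-- Composition `χ ∘ u` of rational functions, by evaluation of `χ` at `u`. -/
def compRatFunc {F : Type*} [Field F] (χ u : RatFunc F) : RatFunc F :=
  RatFunc.eval (algebraMap F (RatFunc F)) u χ

end

section Aux
variable {F : Type*} [Field F]

lemma eval₂_rid (p : F[X]) (t : F) : p.eval₂ (RingHom.id F) t = p.eval t := by
  rw [eval₂_eq_eval_map, Polynomial.map_id]

lemma ratEval_eq (r : RatFunc F) (t : F) :
    RatFunc.eval (RingHom.id F) t r = r.num.eval t / r.denom.eval t := by
  rw [RatFunc.eval, eval₂_rid, eval₂_rid]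

lemma algebraMap_F_eq (a : F) :
    algebraMap F (RatFunc F) a = algebraMap F[X] (RatFunc F) (C a) := by
  rw [IsScalarTower.algebraMap_apply F F[X] (RatFunc F)]; rfl

lemma num_denom_of_coprime {p q : F[X]} (hq : q.Monic) (hcop : IsCoprime p q) :
    (algebraMap F[X] (RatFunc F) p / algebraMap F[X] (RatFunc F) q).num = p ∧
    (algebraMap F[X] (RatFunc F) p / algebraMap F[X] (RatFunc F) q).denom = q := by
  set x := algebraMap F[X] (RatFunc F) p / algebraMap F[X] (RatFunc F) q with hx
  have hq0 : q ≠ 0 := hq.ne_zero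
  have hmain : x.num * q = p * x.denom := (RatFunc.num_mul_eq_mul_denom_iff hq0).2 hx
  have hdvd1 : x.denom ∣ q := RatFunc.denom_div_dvd p q
  have hdvd2 : q ∣ x.denom := by
    refine hcop.symm.dvd_of_dvd_mul_left ⟨x.num, ?_⟩
    rw [← hmain]; ring
  have hdeq : x.denom = q := eq_of_monic_of_associated (RatFunc.monic_denom x) hq
    (associated_of_dvd_dvd hdvd1 hdvd2)
  refine ⟨?_, hdeq⟩
  have := hmain
  rw [hdeq] at this
  exact mul_right_cancel₀ hq0 this

lemma conj_num (σ : F →+* F) (r : RatFunc F) :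
    (conjRatFunc σ r).num = r.num.map σ ∧ (conjRatFunc σ r).denom = r.denom.map σ := by
  refine num_denom_of_coprime ((RatFunc.monic_denom r).map σ) ?_
  have h := (RatFunc.isCoprime_num_denom r).map (Polynomial.mapRingHom σ)
  simpa using h

lemma aeval_eval {m : ℕ} (ψ : Fin m → RatFunc F) (t : F) (h : definedAt ψ t)
    (p : MvPolynomial (Fin m) F) :
    (MvPolynomial.aeval ψ p).denom.eval t ≠ 0 ∧
      RatFunc.eval (RingHom.id F) t (MvPolynomial.aeval ψ p)
        = MvPolynomial.eval (evalParam ψ t) p := by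
  induction p using MvPolynomial.induction_on with
  | C a =>
      rw [MvPolynomial.aeval_C, algebraMap_F_eq]
      refine ⟨by simp, ?_⟩
      rw [ratEval_eq]
      simp
  | add p q hp hq =>
      rw [map_add]
      obtain ⟨e, he⟩ := RatFunc.denom_add_dvd (MvPolynomial.aeval ψ p) (MvPolynomial.aeval ψ q)
      have hprod : (((MvPolynomial.aeval ψ p).denom * (MvPolynomial.aeval ψ q).denom)).eval t ≠ 0 := by
        rw [eval_mul]; exact mul_ne_zero hp.1 hq.1
      rw [he, eval_mul] at hprod
      refine ⟨left_ne_zero_of_mul hprod, ?_⟩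
      rw [RatFunc.eval_add (RingHom.id F) t (by rw [eval₂_rid]; exact hp.1) (by rw [eval₂_rid]; exact hq.1),
        hp.2, hq.2, map_add]
  | mul_X p i hp =>
      rw [map_mul, MvPolynomial.aeval_X]
      obtain ⟨e, he⟩ := RatFunc.denom_mul_dvd (MvPolynomial.aeval ψ p) (ψ i)
      have hprod : (((MvPolynomial.aeval ψ p).denom * (ψ i).denom)).eval t ≠ 0 := by
        rw [eval_mul]; exact mul_ne_zero hp.1 (h i)
      rw [he, eval_mul] at hprod
      refine ⟨left_ne_zero_of_mul hprod, ?_⟩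
      rw [RatFunc.eval_mul (RingHom.id F) t (by rw [eval₂_rid]; exact hp.1) (by rw [eval₂_rid]; exact h i),
        hp.2, map_mul, MvPolynomial.eval_X, ratEval_eq]
      rfl

lemma evalRF_poly (u : RatFunc F) (t : F) (hu : u.denom.eval t ≠ 0) (P : F[X]) :
    (P.eval₂ (algebraMap F (RatFunc F)) u).denom.eval t ≠ 0 ∧
      RatFunc.eval (RingHom.id F) t (P.eval₂ (algebraMap F (RatFunc F)) u)
        = P.eval (RatFunc.eval (RingHom.id F) t u) := by
  induction P using Polynomial.induction_on with
  | C a =>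
      rw [eval₂_C, algebraMap_F_eq]
      refine ⟨by simp, ?_⟩
      rw [ratEval_eq]
      simp
  | add p q hp hq =>
      rw [eval₂_add]
      obtain ⟨e, he⟩ := RatFunc.denom_add_dvd (p.eval₂ (algebraMap F (RatFunc F)) u)
        (q.eval₂ (algebraMap F (RatFunc F)) u)
      have hprod : ((p.eval₂ (algebraMap F (RatFunc F)) u).denom *
          (q.eval₂ (algebraMap F (RatFunc F)) u).denom).eval t ≠ 0 := by
        rw [eval_mul]; exact mul_ne_zero hp.1 hq.1
      rw [he, eval_mul] at hprod
      refine ⟨left_ne_zero_of_mul hprod, ?_⟩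
      rw [RatFunc.eval_add (RingHom.id F) t (by rw [eval₂_rid]; exact hp.1) (by rw [eval₂_rid]; exact hq.1),
        hp.2, hq.2, eval_add]
  | monomial n a ih =>
      have hrw : (C a * X ^ (n + 1)).eval₂ (algebraMap F (RatFunc F)) u
          = (C a * X ^ n).eval₂ (algebraMap F (RatFunc F)) u * u := by
        rw [eval₂_mul, eval₂_mul, eval₂_pow, eval₂_pow, eval₂_X, pow_succ, mul_assoc]
      rw [hrw]
      obtain ⟨e, he⟩ := RatFunc.denom_mul_dvd ((C a * X ^ n).eval₂ (algebraMap F (RatFunc F)) u) u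
      have hprod : (((C a * X ^ n).eval₂ (algebraMap F (RatFunc F)) u).denom * u.denom).eval t ≠ 0 := by
        rw [eval_mul]; exact mul_ne_zero ih.1 hu
      rw [he, eval_mul] at hprod
      refine ⟨left_ne_zero_of_mul hprod, ?_⟩
      rw [RatFunc.eval_mul (RingHom.id F) t (by rw [eval₂_rid]; exact ih.1) (by rw [eval₂_rid]; exact hu),
        ih.2, eval_mul, eval_mul, eval_pow, eval_pow, eval_X, pow_succ, mul_assoc]

lemma eval₂_ne_zero_of_nonconst [IsAlgClosed F] {u : RatFunc F}
    (hu : u ∉ Set.range (algebraMap F (RatFunc F))) {D : F[X]} (hD : D ≠ 0) :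
    D.eval₂ (algebraMap F (RatFunc F)) u ≠ 0 := by
  intro h0
  rw [eval₂_eq_eval_map] at h0
  have hinj : Function.Injective (algebraMap F (RatFunc F)) := (algebraMap F (RatFunc F)).injective
  have hm : D.map (algebraMap F (RatFunc F)) ≠ 0 := by
    simpa [Polynomial.map_ne_zero_iff hinj] using hD
  have hroot : u ∈ (D.map (algebraMap F (RatFunc F))).roots := (mem_roots hm).2 h0
  rw [(IsAlgClosed.splits D).roots_map] at hroot
  obtain ⟨r, _, hr⟩ := Multiset.mem_map.1 hroot
  exact hu ⟨r, hr⟩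

lemma mobius_not_const {u : RatFunc F} (h : IsMobius u) :
    u ∉ Set.range (algebraMap F (RatFunc F)) := by
  obtain ⟨a, b, c, d, hdet, rfl⟩ := h
  rintro ⟨k, hk⟩
  have hB : (C c * X + C d : F[X]) ≠ 0 := by
    intro h0
    have hc : c = 0 := by simpa using congrArg (fun p => Polynomial.coeff p 1) h0
    have hd : d = 0 := by simpa using congrArg (fun p => Polynomial.coeff p 0) h0
    apply hdet; rw [hc, hd]; ring
  have hBK : algebraMap F[X] (RatFunc F) (C c * X + C d) ≠ 0 := RatFunc.algebraMap_ne_zero hB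
  rw [algebraMap_F_eq, eq_div_iff hBK, ← map_mul] at hk
  have hk' : (C k : F[X]) * (C c * X + C d) = C a * X + C b :=
    RatFunc.algebraMap_injective F hk
  have h1 : k * c = a := by simpa using congrArg (fun p => Polynomial.coeff p 1) hk'
  have h0 : k * d = b := by simpa using congrArg (fun p => Polynomial.coeff p 0) hk'
  apply hdet
  rw [← h1, ← h0]; ring

lemma mobius_sub_ne {u : RatFunc F} (h : IsMobius u) (e : F) :
    u.num - C e * u.denom ≠ 0 := by
  intro h0
  apply mobius_not_const h
  refine ⟨e, ?_⟩
  have hnum : u.num = C e * u.denom := by linear_combination h0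
  have := RatFunc.num_div_denom u
  rw [hnum, map_mul, mul_div_assoc,
    div_self (RatFunc.algebraMap_ne_zero (RatFunc.denom_ne_zero u)), mul_one] at this
  rw [algebraMap_F_eq]
  exact this

end Aux

section Aux2
variable {F : Type*} [Field F] {m : ℕ}

lemma conj_definedAt (σ : F ≃+* F) (ψ : Fin m → RatFunc F) (x : F) :
    definedAt (fun i => conjRatFunc (σ : F →+* F) (ψ i)) (σ x) ↔ definedAt ψ x := by
  unfold definedAt
  have hden : ∀ i, (conjRatFunc (σ : F →+* F) (ψ i)).denom.eval (σ x)
      = σ ((ψ i).denom.eval x) := by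
    intro i
    rw [(conj_num (σ : F →+* F) (ψ i)).2, ← Polynomial.eval₂_eq_eval_map,
      show σ x = (σ : F →+* F) x from rfl, Polynomial.eval₂_hom]
    rfl
  constructor <;> intro h i
  · intro h0; exact h i (by rw [hden i, h0, map_zero])
  · rw [hden i]; simpa using h i

lemma conj_evalParam (σ : F ≃+* F) (ψ : Fin m → RatFunc F) (x : F) :
    evalParam (fun i => conjRatFunc (σ : F →+* F) (ψ i)) (σ x)
      = fun i => σ (evalParam ψ x i) := by
  funext i
  unfold evalParam
  rw [(conj_num (σ : F →+* F) (ψ i)).1, (conj_num (σ : F →+* F) (ψ i)).2,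
    ← Polynomial.eval₂_eq_eval_map, ← Polynomial.eval₂_eq_eval_map,
    show σ x = (σ : F →+* F) x from rfl, Polynomial.eval₂_hom, Polynomial.eval₂_hom, map_div₀]
  rfl

lemma conj_genInj (σ : F ≃+* F) (ψ : Fin m → RatFunc F) (hψ : GenericallyInjective ψ) :
    GenericallyInjective (fun i => conjRatFunc (σ : F →+* F) (ψ i)) := by
  set ψσ := fun i => conjRatFunc (σ : F →+* F) (ψ i) with hψσ
  apply (hψ.image (Prod.map σ σ)).subset
  rintro ⟨s, s'⟩ ⟨hne, hd, hd', heq⟩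
  refine ⟨(σ.symm s, σ.symm s'), ⟨?_, ?_, ?_, ?_⟩, by simp⟩
  · intro h; apply hne; simpa using congrArg σ h
  · exact (conj_definedAt σ ψ (σ.symm s)).1 (by simpa using hd)
  · exact (conj_definedAt σ ψ (σ.symm s')).1 (by simpa using hd')
  · funext i
    have h1 := congrFun (conj_evalParam σ ψ (σ.symm s)) i
    have h2 := congrFun (conj_evalParam σ ψ (σ.symm s')) i
    simp only [RingEquiv.apply_symm_apply] at h1 h2
    apply σ.injective
    rw [← h1, ← h2, heq]

lemma inj_outside {ψ : Fin m → RatFunc F} (h : GenericallyInjective ψ) :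
    ∃ B : Set F, B.Finite ∧ ∀ ⦃t t' : F⦄, t ∉ B → t' ∉ B → definedAt ψ t → definedAt ψ t' →
      evalParam ψ t = evalParam ψ t' → t = t' := by
  classical
  refine ⟨Prod.fst '' {p : F × F | p.1 ≠ p.2 ∧ definedAt ψ p.1 ∧ definedAt ψ p.2 ∧
    evalParam ψ p.1 = evalParam ψ p.2}, h.image _, ?_⟩
  intro t t' ht ht' hd hd' he
  by_contra hne
  exact ht ⟨(t, t'), ⟨hne, hd, hd', he⟩, rfl⟩

lemma uniq_outside {ψ : Fin m → RatFunc F} (h : GenericallyInjective ψ) :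
    ∃ E : Set F, E.Finite ∧ ∀ ⦃s s' : F⦄, definedAt ψ s → definedAt ψ s' →
      evalParam ψ s = evalParam ψ s' → s' ∉ E → s = s' := by
  classical
  refine ⟨Prod.snd '' {p : F × F | p.1 ≠ p.2 ∧ definedAt ψ p.1 ∧ definedAt ψ p.2 ∧
    evalParam ψ p.1 = evalParam ψ p.2}, h.image _, ?_⟩
  intro s s' hd hd' he hs'
  by_contra hne
  exact hs' ⟨(s, s'), ⟨hne, hd, hd', he⟩, rfl⟩

lemma notDefined_finite (ψ : Fin m → RatFunc F) : {t : F | ¬ definedAt ψ t}.Finite := by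
  apply Set.Finite.subset (Set.finite_iUnion
    (fun i => Polynomial.finite_setOf_isRoot (RatFunc.denom_ne_zero (ψ i))))
  intro t ht
  simp only [definedAt, not_forall, not_not] at ht
  obtain ⟨i, hi⟩ := ht
  exact Set.mem_iUnion.2 ⟨i, hi⟩

lemma vanish (ψ : Fin m → RatFunc F) {T : Set F} (hT : T.Infinite)
    (hdef : ∀ t ∈ T, definedAt ψ t) (p : MvPolynomial (Fin m) F)
    (hv : ∀ t ∈ T, MvPolynomial.eval (evalParam ψ t) p = 0) :
    ∀ x ∈ paramImage ψ, MvPolynomial.eval x p = 0 := by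
  have hr : (MvPolynomial.aeval ψ p) = 0 := by
    by_contra hr0
    have hnum : (MvPolynomial.aeval ψ p).num ≠ 0 := RatFunc.num_ne_zero hr0
    apply hT
    apply (Polynomial.finite_setOf_isRoot hnum).subset
    intro t ht
    have h := aeval_eval ψ t (hdef t ht) p
    have h2 : RatFunc.eval (RingHom.id F) t (MvPolynomial.aeval ψ p) = 0 := by
      rw [h.2, hv t ht]
    rw [ratEval_eq] at h2
    exact (div_eq_zero_iff.1 h2).resolve_right h.1
  rintro x ⟨t, hdt, rfl⟩
  have h := (aeval_eval ψ t hdt p).2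
  rw [hr] at h
  simpa using h.symm

end Aux2

open IntermediateField in
/-- If `C = C^σ`, then for all but finitely many `t₀` the value `u_σ(t₀)` of the
reparametrizing Möbius transformation is the unique solution of `ψ^σ(s) = ψ(t₀)`;
if `C ≠ C^σ`, then for all but finitely many `t₀` this system has no solution. -/
theorem reparametrization_solutions {K F : Type*} [Field K] [Field F] [IsAlgClosed F]
    [CharZero F] [Algebra K F] {m : ℕ} (α : F) (σ : F ≃ₐ[K] F)
    (ψ : Fin m → RatFunc F) (hψ : GenericallyInjective ψ)
    (hcoeff : ∀ i k, (ψ i).num.coeff k ∈ K⟮α⟯ ∧ (ψ i).denom.coeff k ∈ K⟮α⟯) :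
    letI ψσ : Fin m → RatFunc F := fun i => conjRatFunc (σ : F →+* F) (ψ i)
    ((zariskiClosure (paramImage ψ) = zariskiClosure (paramImage ψσ) →
      ∀ u : RatFunc F, IsMobius u → (∀ i, ψ i = compRatFunc (ψσ i) u) →
        ∃ S : Set F, S.Finite ∧ ∀ t₀ ∉ S,
          {s : F | definedAt ψσ s ∧ evalParam ψσ s = evalParam ψ t₀}
            = {RatFunc.eval (RingHom.id F) t₀ u}) ∧
     (zariskiClosure (paramImage ψ) ≠ zariskiClosure (paramImage ψσ) →
      ∃ S : Set F, S.Finite ∧ ∀ t₀ ∉ S,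
        ¬ ∃ s : F, definedAt ψσ s ∧ evalParam ψσ s = evalParam ψ t₀)) := by
  set ψσ : Fin m → RatFunc F := fun i => conjRatFunc (σ : F →+* F) (ψ i) with hψσ
  constructor
  · -- Part 1
    intro _hC u hu hcomp
    have hσinj : GenericallyInjective ψσ := conj_genInj σ.toRingEquiv ψ hψ
    obtain ⟨E, hEfin, hEuniq⟩ := uniq_outside hσinj
    have huc := mobius_not_const hu
    have hDU0 : ∀ i, ((ψσ i).denom).eval₂ (algebraMap F (RatFunc F)) u ≠ 0 :=
      fun i => eval₂_ne_zero_of_nonconst huc (RatFunc.denom_ne_zero _)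
    have hψeq : ∀ i, ψ i = ((ψσ i).num).eval₂ (algebraMap F (RatFunc F)) u /
        ((ψσ i).denom).eval₂ (algebraMap F (RatFunc F)) u := by
      intro i; rw [hcomp i]; rfl
    refine ⟨{t | ¬ definedAt ψ t} ∪ {t | u.denom.eval t = 0}
      ∪ (⋃ i, {t | (((ψσ i).denom).eval₂ (algebraMap F (RatFunc F)) u).num.eval t = 0})
      ∪ (⋃ e ∈ E, {t | (u.num - C e * u.denom).eval t = 0}), ?_, ?_⟩
    · exact (((notDefined_finite ψ).union
        (Polynomial.finite_setOf_isRoot (RatFunc.denom_ne_zero u))).union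
        (Set.finite_iUnion fun i =>
          Polynomial.finite_setOf_isRoot (RatFunc.num_ne_zero (hDU0 i)))).union
        (hEfin.biUnion fun e _ => Polynomial.finite_setOf_isRoot (mobius_sub_ne hu e))
    · intro t₀ ht₀
      simp only [Set.mem_union, Set.mem_iUnion, Set.mem_setOf_eq] at ht₀
      push_neg at ht₀
      obtain ⟨⟨⟨h1, h2⟩, h3⟩, h4⟩ := ht₀
      set ub := RatFunc.eval (RingHom.id F) t₀ u with hub
      have hdefub : definedAt ψσ ub := by
        intro i
        have h := evalRF_poly u t₀ h2 ((ψσ i).denom)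
        have hne : RatFunc.eval (RingHom.id F) t₀
            (((ψσ i).denom).eval₂ (algebraMap F (RatFunc F)) u) ≠ 0 := by
          rw [ratEval_eq]; exact div_ne_zero (h3 i) h.1
        rw [h.2] at hne
        exact hne
      have hval : evalParam ψσ ub = evalParam ψ t₀ := by
        funext i
        have hN := evalRF_poly u t₀ h2 ((ψσ i).num)
        have hD := evalRF_poly u t₀ h2 ((ψσ i).denom)
        have hmul : ψ i * (((ψσ i).denom).eval₂ (algebraMap F (RatFunc F)) u)
            = ((ψσ i).num).eval₂ (algebraMap F (RatFunc F)) u := by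
          rw [hψeq i, div_mul_cancel₀ _ (hDU0 i)]
        have hev := congrArg (RatFunc.eval (RingHom.id F) t₀) hmul
        rw [RatFunc.eval_mul (RingHom.id F) t₀ (by rw [eval₂_rid]; exact h1 i)
          (by rw [eval₂_rid]; exact hD.1), hN.2, hD.2] at hev
        show (ψσ i).num.eval ub / (ψσ i).denom.eval ub = evalParam ψ t₀ i
        have h5 : evalParam ψ t₀ i = RatFunc.eval (RingHom.id F) t₀ (ψ i) :=
          (ratEval_eq _ _).symm
        rw [h5, div_eq_iff (hdefub i)]
        exact hev.symm
      have hubE : ub ∉ E := by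
        intro hmem
        apply h4 ub hmem
        rw [eval_sub, eval_mul, eval_C, hub, ratEval_eq, div_mul_cancel₀ _ h2, sub_self]
      ext s
      simp only [Set.mem_setOf_eq, Set.mem_singleton_iff]
      constructor
      · rintro ⟨hs, hvals⟩
        exact hEuniq hs hdefub (hvals.trans hval.symm) hubE
      · rintro rfl
        exact ⟨hdefub, hval⟩
  · -- Part 2
    intro hne
    by_contra hcon
    push_neg at hcon
    set T := {t : F | definedAt ψ t ∧ ∃ s, definedAt ψσ s ∧ evalParam ψσ s = evalParam ψ t}
      with hT
    have hTinf : T.Infinite := by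
      intro hfin
      obtain ⟨t₀, ht₀S, s, hs1, hs2⟩ := hcon (T ∪ {t | ¬ definedAt ψ t})
        (hfin.union (notDefined_finite ψ))
      have hd : definedAt ψ t₀ := by
        by_contra h; exact ht₀S (Set.mem_union_right _ h)
      exact ht₀S (Set.mem_union_left _ ⟨hd, s, hs1, hs2⟩)
    obtain ⟨B, hBfin, hBinj⟩ := inj_outside hψ
    have hsel : ∀ t ∈ T, ∃ s, definedAt ψσ s ∧ evalParam ψσ s = evalParam ψ t :=
      fun t ht => ht.2
    choose! f hf1 hf2 using hsel
    have key : ∀ p : MvPolynomial (Fin m) F,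
        (∀ x ∈ paramImage ψ, MvPolynomial.eval x p = 0) ↔
        (∀ x ∈ paramImage ψσ, MvPolynomial.eval x p = 0) := by
      intro p
      constructor
      · intro hp
        have hinf : (f '' (T \ B)).Infinite := by
          apply Set.Infinite.image ?_ (hTinf.diff hBfin)
          intro t ht t' ht' hft
          refine hBinj ht.2 ht'.2 ht.1.1 ht'.1.1 ?_
          rw [← hf2 t ht.1, ← hf2 t' ht'.1, hft]
        apply vanish ψσ hinf ?_ p ?_
        · rintro s ⟨t, ht, rfl⟩; exact hf1 t ht.1
        · rintro s ⟨t, ht, rfl⟩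
          rw [hf2 t ht.1]
          exact hp _ ⟨t, ht.1.1, rfl⟩
      · intro hp
        apply vanish ψ hTinf (fun t ht => ht.1) p
        intro t ht
        rw [← hf2 t ht]
        exact hp _ ⟨f t, hf1 t ht, rfl⟩
    apply hne
    ext x
    simp only [zariskiClosure, Set.mem_setOf_eq]
    constructor
    · intro h p hp; exact h p ((key p).2 hp)
    · intro h p hp; exact h p ((key p).1 hp)
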